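/- The polynomial Â_{n,j}(t), defined as the descent generating function over permutations w ∈ S_n with w(1) = j or w(1) = n+1-j, has symmetric coefficients: the coefficient of t^i equals the coefficient of t^{n-1-i}. -/

import Mathlib

open scoped Classical

/-- The number of descents of a permutation of `Fin n` (positions are 0-based:
`i` is a descent if `w i > w (i+1)`). -/
def des {n : ℕ} (w : Equiv.Perm (Fin n)) : ℕ :=
  (Finset.univ.filter fun i : Fin n => ∃ h : (i : ℕ) + 1 < n, w ⟨(i : ℕ) + 1, h⟩ < w i).card

/-- `A n i j` = number of permutations `w` of `{1,…,n}` with `w(1) = j` (1-based)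
and exactly `i` descents. -/
def A (n i j : ℕ) : ℕ :=
  (Finset.univ.filter fun w : Equiv.Perm (Fin n) =>
    (∀ x : Fin n, (x : ℕ) = 0 → (w x : ℕ) + 1 = j) ∧ des w = i).card

/-- The Eulerian number: permutations of `{1,…,n}` with exactly `i` descents. -/
def Eul (n i : ℕ) : ℕ :=
  (Finset.univ.filter fun w : Equiv.Perm (Fin n) => des w = i).card

open Polynomial

/-- Restricted Eulerian polynomial `A_{n,j}(t) = Σ_{w(1)=j} t^{d(w)}`. -/
noncomputable def Apoly (n j : ℕ) : Polynomial ℤ :=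
  ∑ w ∈ (Finset.univ.filter fun w : Equiv.Perm (Fin n) =>
      ∀ x : Fin n, (x : ℕ) = 0 → (w x : ℕ) + 1 = j), X ^ des w

/-- Symmetric restricted Eulerian polynomial
`Â_{n,j}(t) = Σ_{w(1) ∈ {j, n+1-j}} t^{d(w)}`. -/
noncomputable def AhatPoly (n j : ℕ) : Polynomial ℤ :=
  ∑ w ∈ (Finset.univ.filter fun w : Equiv.Perm (Fin n) =>
      ∀ x : Fin n, (x : ℕ) = 0 → ((w x : ℕ) + 1 = j ∨ (w x : ℕ) + 1 = n + 1 - j)),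
    X ^ des w

/-- `Â'_{n,j}(t) = t·A_{n,j}(t) + A_{n,n+1-j}(t)`. -/
noncomputable def AhatPoly' (n j : ℕ) : Polynomial ℤ :=
  X * Apoly n j + Apoly n (n + 1 - j)

lemma card_T (n : ℕ) : (Finset.univ.filter fun i : Fin n => (i : ℕ) + 1 < n).card = n - 1 := by
  rcases n with _ | m
  · simp
  · have he : (Finset.univ.filter fun i : Fin (m + 1) => (i : ℕ) + 1 < m + 1)
        = Finset.univ \ {Fin.last m} := by
      ext i
      simp only [Finset.mem_filter, Finset.mem_sdiff, Finset.mem_univ, true_and,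
        Finset.mem_singleton]
      constructor
      · intro h hi
        rw [hi] at h
        simp [Fin.val_last] at h
      · intro h
        have := i.isLt
        have hv : (i : ℕ) ≠ m := fun hv => h (Fin.ext (by simp [hv]))
        omega
    rw [he, Finset.card_sdiff_of_subset (by simp)]
    simp

lemma des_subset {n : ℕ} (w : Equiv.Perm (Fin n)) :
    (Finset.univ.filter fun i : Fin n => ∃ h : (i : ℕ) + 1 < n, w ⟨(i : ℕ) + 1, h⟩ < w i)
      ⊆ Finset.univ.filter fun i : Fin n => (i : ℕ) + 1 < n := by
  intro i hi
  simp only [Finset.mem_filter, Finset.mem_univ, true_and] at hi ⊢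
  exact hi.1

lemma des_le {n : ℕ} (w : Equiv.Perm (Fin n)) : des w ≤ n - 1 := by
  calc des w ≤ (Finset.univ.filter fun i : Fin n => (i : ℕ) + 1 < n).card :=
        Finset.card_le_card (des_subset w)
    _ = n - 1 := card_T n

lemma des_rev {n : ℕ} (w : Equiv.Perm (Fin n)) :
    des (w.trans Fin.revPerm) = (n - 1) - des w := by
  have h1 : (Finset.univ.filter fun i : Fin n =>
      ∃ h : (i : ℕ) + 1 < n, (w.trans Fin.revPerm) ⟨(i : ℕ) + 1, h⟩ < (w.trans Fin.revPerm) i)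
      = (Finset.univ.filter fun i : Fin n => (i : ℕ) + 1 < n) \
        (Finset.univ.filter fun i : Fin n => ∃ h : (i : ℕ) + 1 < n, w ⟨(i : ℕ) + 1, h⟩ < w i) := by
    ext i
    simp only [Finset.mem_filter, Finset.mem_sdiff, Finset.mem_univ, true_and,
      Equiv.trans_apply, Fin.revPerm_apply, Fin.rev_lt_rev]
    constructor
    · rintro ⟨h, hlt⟩
      refine ⟨h, ?_⟩
      rintro ⟨h', hlt'⟩
      exact absurd hlt (not_lt_of_gt hlt')
    · rintro ⟨h, hnd⟩
      refine ⟨h, ?_⟩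
      have hne : w i ≠ w ⟨(i : ℕ) + 1, h⟩ := by
        intro he
        have := w.injective he
        exact absurd (congrArg Fin.val this) (by simp)
      rcases lt_or_gt_of_ne hne with hlt | hgt
      · exact hlt
      · exact absurd ⟨h, hgt⟩ hnd
  unfold des
  rw [h1, Finset.card_sdiff_of_subset (des_subset w), card_T n]


lemma coeff_Ahat (n j k : ℕ) :
    ((∑ w ∈ (Finset.univ.filter fun w : Equiv.Perm (Fin n) =>
      ∀ x : Fin n, (x : ℕ) = 0 → ((w x : ℕ) + 1 = j ∨ (w x : ℕ) + 1 = n + 1 - j)),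
      (X : Polynomial ℤ) ^ des w)).coeff k
    = (((Finset.univ.filter fun w : Equiv.Perm (Fin n) =>
      ∀ x : Fin n, (x : ℕ) = 0 → ((w x : ℕ) + 1 = j ∨ (w x : ℕ) + 1 = n + 1 - j)).filter
        fun w => des w = k).card : ℤ) := by
  rw [Polynomial.finset_sum_coeff]
  simp_rw [Polynomial.coeff_X_pow]
  rw [Finset.sum_boole]
  exact_mod_cast congrArg Finset.card (Finset.filter_congr (fun w _ => by simp [eq_comm]))

theorem aux_symm (n j : ℕ) (hn : 1 ≤ n) (hj1 : 1 ≤ j) (hjn : j ≤ n) :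
    ∀ i ≤ n - 1,
    ((∑ w ∈ (Finset.univ.filter fun w : Equiv.Perm (Fin n) =>
      ∀ x : Fin n, (x : ℕ) = 0 → ((w x : ℕ) + 1 = j ∨ (w x : ℕ) + 1 = n + 1 - j)),
      (X : Polynomial ℤ) ^ des w)).coeff i
    = ((∑ w ∈ (Finset.univ.filter fun w : Equiv.Perm (Fin n) =>
      ∀ x : Fin n, (x : ℕ) = 0 → ((w x : ℕ) + 1 = j ∨ (w x : ℕ) + 1 = n + 1 - j)),
      (X : Polynomial ℤ) ^ des w)).coeff (n - 1 - i) := by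
  intro i hi
  rw [coeff_Ahat, coeff_Ahat]
  congr 1
  have key : ∀ w : Equiv.Perm (Fin n),
      (∀ x : Fin n, (x : ℕ) = 0 → ((w x : ℕ) + 1 = j ∨ (w x : ℕ) + 1 = n + 1 - j)) →
      ∀ x : Fin n, (x : ℕ) = 0 →
        (((w.trans Fin.revPerm) x : ℕ) + 1 = j ∨ ((w.trans Fin.revPerm) x : ℕ) + 1 = n + 1 - j) := by
    intro w hw x hx
    have h1 := hw x hx
    have h2 : (w x : ℕ) < n := (w x).isLt
    simp only [Equiv.trans_apply, Fin.revPerm_apply, Fin.val_rev]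
    omega
  apply Finset.card_nbij' (fun w => w.trans Fin.revPerm) (fun w => w.trans Fin.revPerm)
  · intro w hw
    simp only [Finset.mem_coe, Finset.mem_filter, Finset.mem_univ, true_and] at hw ⊢
    refine ⟨key w hw.1, ?_⟩
    rw [des_rev, hw.2]
  · intro w hw
    simp only [Finset.mem_coe, Finset.mem_filter, Finset.mem_univ, true_and] at hw ⊢
    refine ⟨key w hw.1, ?_⟩
    rw [des_rev, hw.2]
    omega
  · intro w _
    ext x
    simp
  · intro w _
    ext x
    simp


theorem stmt5 (n j : ℕ) (hn : 1 ≤ n) (hj1 : 1 ≤ j) (hjn : j ≤ n) :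
    ∀ i ≤ n - 1, (AhatPoly n j).coeff i = (AhatPoly n j).coeff (n - 1 - i) := by
  simp only [AhatPoly]
  exact aux_symm n j hn hj1 hjn
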